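/- Let b ≥ 2 and define 2×2 integer matrices A_0 = [[1,0],[1,1]], A_1 = [[1,1],[0,1]], and A_i = [[0,1],[0,1]] for 2 ≤ i ≤ b-1. If n has base-b expansion n = (ε_d ... ε_0)_b, then s_b(n) = (1,0) · A_{ε_0} ⋯ A_{ε_d} · (0,1)^T. -/

import Mathlib

def IsSb (b : ℕ) (s : ℕ → ℕ) : Prop :=
  s 0 = 0 ∧ s 1 = 1 ∧
  ∀ n : ℕ, s (b * n) = s n ∧ s (b * n + 1) = s n + s (n + 1) ∧
    ∀ i : ℕ, 2 ≤ i → i ≤ b - 1 → s (b * n + i) = s (n + 1)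

/-- The matrix associated to a base-b digit: A_0, A_1, and A_i = [[0,1],[0,1]] for i ≥ 2. -/
def digitMatrix (ε : ℕ) : Matrix (Fin 2) (Fin 2) ℕ :=
  if ε = 0 then !![1, 0; 1, 1] else if ε = 1 then !![1, 1; 0, 1] else !![0, 1; 0, 1]

/-- If n = (ε_d … ε_0)_b then s_b(n) = (1,0)·A_{ε_0}⋯A_{ε_d}·(0,1)ᵀ, i.e. the
(0,1) entry of the product A_{ε_0}⋯A_{ε_d} (digits least significant first). -/
theorem stmt2 (b : ℕ) (hb : 2 ≤ b) (s : ℕ → ℕ) (hs : IsSb b s) (n : ℕ) :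
    s n = dotProduct
      (Matrix.vecMul ![1, 0] ((Nat.digits b n).map digitMatrix).prod) ![0, 1] := by
  obtain ⟨h0, h1, hrec⟩ := hs
  have key : ∀ m : ℕ, Matrix.mulVec ((Nat.digits b m).map digitMatrix).prod ![0, 1]
      = ![s m, s (m + 1)] := by
    intro m
    induction m using Nat.strong_induction_on with
    | _ m ih =>
      rcases Nat.eq_zero_or_pos m with rfl | hm
      · funext i; fin_cases i <;> simp [h0, h1]
      · rw [Nat.digits_def' (by omega : 1 < b) hm, List.map_cons, List.prod_cons,
          ← Matrix.mulVec_mulVec, ih (m / b) (Nat.div_lt_self hm (by omega))]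
        have hmod : b * (m / b) + m % b = m := Nat.div_add_mod m b
        have hr : m % b < b := Nat.mod_lt m (by omega)
        set q := m / b with hq
        set r := m % b with hrdef
        have hsm : s m = (if r = 0 then s q else if r = 1 then s q + s (q + 1)
            else s (q + 1)) := by
          split_ifs with e0 e1
          · rw [← hmod, e0]; exact (hrec q).1
          · rw [← hmod, e1]; exact (hrec q).2.1
          · rw [← hmod]; exact (hrec q).2.2 r (by omega) (by omega)
        have hsm1 : s (m + 1) = (if r = 0 then s q + s (q + 1) else s (q + 1)) := by
          split_ifs with e0
          · rw [← hmod, e0]; exact (hrec q).2.1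
          · rcases Nat.lt_or_ge (r + 1) b with hlt | hge
            · have : m + 1 = b * q + (r + 1) := by omega
              rw [this]; exact (hrec q).2.2 (r + 1) (by omega) (by omega)
            · have hrb : r + 1 = b := by omega
              have : m + 1 = b * (q + 1) := by rw [Nat.mul_add, Nat.mul_one]; omega
              rw [this]; exact (hrec (q + 1)).1
        rcases Nat.eq_zero_or_pos r with e0 | hr1
        · funext i; fin_cases i <;>
            simp [digitMatrix, e0, hsm, hsm1, Matrix.mulVec, dotProduct,
              Fin.sum_univ_two]
        · rcases Nat.eq_or_lt_of_le hr1 with e1 | hr2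
          · funext i; fin_cases i <;>
              simp [digitMatrix, ← e1, hsm, hsm1, Matrix.mulVec, dotProduct,
                Fin.sum_univ_two, add_comm]
          · have hdm : digitMatrix r = !![0, 1; 0, 1] := by
              rw [digitMatrix, if_neg (by omega), if_neg (by omega)]
            have e0 : r ≠ 0 := by omega
            have e1 : r ≠ 1 := by omega
            funext i; fin_cases i <;>
              simp [hdm, e0, e1, hsm, hsm1,
                Matrix.mulVec, dotProduct, Fin.sum_univ_two]
  rw [← Matrix.dotProduct_mulVec, key]
  simp [dotProduct, Fin.sum_univ_two]
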